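/- Let W satisfy h(W∘W) = 0 and let F be differentiable with ∇F(W) ≠ 0. Then for any α ≥ 0 and ρ ≥ 0, W is not a stationary point of the augmented Lagrangian L(W) = F(W) + α h(W∘W) + (ρ/2) h(W∘W)^2; i.e., ∇L(W) ≠ 0. -/

import Mathlib

attribute [local instance] Matrix.frobeniusNormedAddCommGroup Matrix.frobeniusNormedSpace

/-- `h(A) = Σ_{p=1}^d c_p tr(A^p)`. -/
noncomputable def hsum {d : ℕ} (c : ℕ → ℝ) (A : Matrix (Fin d) (Fin d) ℝ) : ℝ :=
  ∑ p ∈ Finset.Icc 1 d, c p * (A ^ p).trace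

section Aux

attribute [local instance] Matrix.frobeniusNormedRing Matrix.frobeniusNormedAlgebra

variable {d : ℕ}

lemma pow_entry_nonneg (A : Matrix (Fin d) (Fin d) ℝ) (hA : ∀ i j, 0 ≤ A i j) (p : ℕ) :
    ∀ i j, 0 ≤ (A ^ p) i j := by
  induction p with
  | zero =>
    intro i j
    simp only [pow_zero, Matrix.one_apply]
    split <;> norm_num
  | succ n ih =>
    intro i j
    rw [pow_succ, Matrix.mul_apply]
    exact Finset.sum_nonneg fun k _ => mul_nonneg (ih i k) (hA k j)

lemma hsum_nonneg (c : ℕ → ℝ) (hc : ∀ p ∈ Finset.Icc 1 d, 0 < c p)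
    (V : Matrix (Fin d) (Fin d) ℝ) : 0 ≤ hsum c (Matrix.hadamard V V) := by
  refine Finset.sum_nonneg fun p hp => mul_nonneg (hc p hp).le ?_
  refine Finset.sum_nonneg fun i _ => ?_
  exact pow_entry_nonneg _ (fun i j => mul_self_nonneg _) p i i

noncomputable def matEquiv : Matrix (Fin d) (Fin d) ℝ ≃ₗ[ℝ] (Fin d → Fin d → ℝ) :=
  { toFun := fun M i j => M i j
    invFun := Matrix.of
    map_add' := fun _ _ => rfl
    map_smul' := fun _ _ => rfl
    left_inv := fun _ => rfl
    right_inv := fun _ => rfl }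

noncomputable def matCLE : Matrix (Fin d) (Fin d) ℝ ≃L[ℝ] (Fin d → Fin d → ℝ) :=
  (matEquiv (d := d)).toContinuousLinearEquiv

lemma diff_had (W : Matrix (Fin d) (Fin d) ℝ) :
    DifferentiableAt ℝ (fun V : Matrix (Fin d) (Fin d) ℝ => Matrix.hadamard V V) W := by
  set e := matCLE (d := d) with he
  have hmid : DifferentiableAt ℝ
      (fun f : Fin d → Fin d → ℝ => fun i j => f i j * f i j) (e W) := by
    rw [differentiableAt_pi]
    intro i
    rw [differentiableAt_pi]
    intro j
    have hev : DifferentiableAt ℝ (fun f : Fin d → Fin d → ℝ => f i j) (e W) :=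
      ((ContinuousLinearMap.proj (R := ℝ) (φ := fun _ : Fin d => ℝ) j).comp
        (ContinuousLinearMap.proj (R := ℝ) (φ := fun _ : Fin d => Fin d → ℝ) i)).differentiableAt
    exact hev.mul hev
  have : (fun V : Matrix (Fin d) (Fin d) ℝ => Matrix.hadamard V V) =
      fun V => e.symm (fun i j => (e V) i j * (e V) i j) := by
    ext V i j
    simp only [he, matCLE]
    rfl
  rw [this]
  exact e.symm.differentiableAt.comp W (hmid.comp W e.differentiableAt)

lemma diff_hsum (c : ℕ → ℝ) (W : Matrix (Fin d) (Fin d) ℝ) :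
    DifferentiableAt ℝ (fun V => hsum c (Matrix.hadamard V V)) W := by
  unfold hsum
  refine DifferentiableAt.fun_sum fun p _ => (DifferentiableAt.const_mul ?_ _)
  exact ((Matrix.traceLinearMap (Fin d) ℝ ℝ).toContinuousLinearMap.differentiableAt).comp W
    ((diff_had W).pow p)

end Aux

theorem stmt12 {d : ℕ} (c : ℕ → ℝ) (hc : ∀ p ∈ Finset.Icc 1 d, 0 < c p)
    (F : Matrix (Fin d) (Fin d) ℝ → ℝ) (W : Matrix (Fin d) (Fin d) ℝ)
    (hF : DifferentiableAt ℝ F W)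
    (hfeas : hsum c (Matrix.hadamard W W) = 0)
    (hgrad : fderiv ℝ F W ≠ 0)
    (α ρ : ℝ) (hα : 0 ≤ α) (hρ : 0 ≤ ρ) :
    fderiv ℝ (fun V => F V + α * hsum c (Matrix.hadamard V V) +
      ρ / 2 * (hsum c (Matrix.hadamard V V)) ^ 2) W ≠ 0 := by
  set g : Matrix (Fin d) (Fin d) ℝ → ℝ := fun V => hsum c (Matrix.hadamard V V) with hg
  set G : Matrix (Fin d) (Fin d) ℝ → ℝ := fun V => α * g V + ρ / 2 * (g V) ^ 2 with hGdef
  have hgd : DifferentiableAt ℝ g W := diff_hsum c W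
  have hGd : DifferentiableAt ℝ G W :=
    ((hgd.const_mul α).add ((hgd.pow 2).const_mul (ρ / 2)))
  have hGmin : IsLocalMin G W := by
    refine Filter.Eventually.of_forall fun V => ?_
    have h0 : G W = 0 := by simp [hGdef, hg, hfeas]
    rw [h0]
    have hgV : 0 ≤ g V := hsum_nonneg c hc V
    have : 0 ≤ α * g V + ρ / 2 * (g V) ^ 2 := by positivity
    exact this
  have hG0 : fderiv ℝ G W = 0 := hGmin.fderiv_eq_zero
  have hfun : (fun V => F V + α * hsum c (Matrix.hadamard V V) +
      ρ / 2 * (hsum c (Matrix.hadamard V V)) ^ 2) = fun V => F V + G V := by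
    ext V; simp [hGdef, hg, add_assoc]
  have key : fderiv ℝ (fun V => F V + G V) W = fderiv ℝ F W := by
    have e := fderiv_fun_add hF hGd
    exact e.trans ((congrArg (fderiv ℝ F W + ·) hG0).trans (add_zero _))
  rw [hfun]
  intro h; apply hgrad; rw [← key]; exact h
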